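/- Let p be a prime, and let k ≥ 1, j ≥ 0, N ≥ 1, M ≥ 1, and r be integers with 1 ≤ r ≤ p^M − 1. If d_k(p^M·n + r) ≡ 0 (mod p^N) for all integers n ≥ 0, then d_{p^{M+N−1}·j + k}(p^M·n + r) ≡ 0 (mod p^N) for all integers n ≥ 0. -/

import Mathlib

open PowerSeries Finset

namespace EDGF

noncomputable def pexp {R : Type*} [CommRing R] (m : ℕ) (f : PowerSeries R) : PowerSeries R :=
  PowerSeries.mk fun n => if m ∣ n then PowerSeries.coeff (R := R) (n / m) f else 0

lemma coeff_pexp {R : Type*} [CommRing R] (m n : ℕ) (f : PowerSeries R) :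
    coeff (R := R) n (pexp m f) = if m ∣ n then coeff (R := R) (n / m) f else 0 :=
  coeff_mk _ _

lemma map_pexp {R S : Type*} [CommRing R] [CommRing S] (φ : R →+* S) (m : ℕ) (f : PowerSeries R) :
    PowerSeries.map φ (pexp m f) = pexp m (PowerSeries.map φ f) := by
  ext n
  simp [coeff_pexp, coeff_map, apply_ite φ]

lemma pexp_pexp {R : Type*} [CommRing R] {a : ℕ} (ha : 0 < a) (b : ℕ) (f : PowerSeries R) :
    pexp a (pexp b f) = pexp (a * b) f := by
  ext n
  simp only [coeff_pexp]
  by_cases h1 : a ∣ n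
  · rw [if_pos h1, Nat.div_div_eq_div_mul]
    by_cases h2 : b ∣ n / a
    · rw [if_pos h2, if_pos ((Nat.dvd_div_iff_mul_dvd h1).mp h2)]
    · rw [if_neg h2, if_neg fun hab => h2 ((Nat.dvd_div_iff_mul_dvd h1).mpr hab)]
  · rw [if_neg h1, if_neg fun hab => h1 (dvd_of_mul_right_dvd hab)]

/-- Frobenius for power series over `ZMod p`. -/
lemma pow_prime_eq_pexp (p : ℕ) [hp : Fact p.Prime] (f : PowerSeries (ZMod p)) :
    f ^ p = pexp p f := by
  ext n
  set t : Polynomial (ZMod p) := trunc (n + 1) f with ht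
  have hX : (X : PowerSeries (ZMod p)) ^ (n + 1) ∣ f - ↑t := by
    rw [X_pow_dvd_iff]
    intro m hm
    simp [ht, Polynomial.coeff_coe, coeff_trunc, hm]
  have hpow : (X : PowerSeries (ZMod p)) ^ (n + 1) ∣ f ^ p - (↑t) ^ p :=
    dvd_trans hX (sub_dvd_pow_sub_pow f (↑t) p)
  have h1 : coeff (R := ZMod p) n (f ^ p) = coeff (R := ZMod p) n ((↑t : PowerSeries (ZMod p)) ^ p) := by
    have := (X_pow_dvd_iff.mp hpow) n (Nat.lt_succ_self n)
    rw [map_sub, sub_eq_zero] at this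
    exact this
  rw [h1, coeff_pexp, ← Polynomial.coe_pow, Polynomial.coeff_coe,
    ← Polynomial.map_frobenius_expand p t, Polynomial.coeff_map, frobenius_def, ZMod.pow_card,
    Polynomial.coeff_expand hp.out.pos]
  by_cases hpn : p ∣ n
  · rw [if_pos hpn, if_pos hpn, ht, coeff_trunc,
      if_pos (Nat.lt_succ_of_le (Nat.div_le_self n p))]
  · rw [if_neg hpn, if_neg hpn]


lemma C_dvd_iff {c : ℤ} {f : PowerSeries ℤ} :
    C (R := ℤ) c ∣ f ↔ ∀ i, c ∣ coeff (R := ℤ) i f := by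
  constructor
  · rintro ⟨w, rfl⟩ i
    rw [coeff_C_mul]
    exact Dvd.intro _ rfl
  · intro h
    refine ⟨PowerSeries.mk fun i => coeff (R := ℤ) i f / c, ?_⟩
    ext i
    rw [coeff_C_mul, coeff_mk, Int.mul_ediv_cancel' (h i)]

lemma int_frobenius (p : ℕ) (hp : p.Prime) (f : PowerSeries ℤ) :
    C (R := ℤ) (p : ℤ) ∣ f ^ p - pexp p f := by
  haveI : Fact p.Prime := ⟨hp⟩
  rw [C_dvd_iff]
  intro i
  have h0 : PowerSeries.map (Int.castRingHom (ZMod p)) (f ^ p - pexp p f) = 0 := by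
    rw [map_sub, map_pow, map_pexp, pow_prime_eq_pexp, sub_self]
  have h1 : ((coeff (R := ℤ) i (f ^ p - pexp p f) : ℤ) : ZMod p) = 0 := by
    have := congrArg (coeff (R := ZMod p) i) h0
    rwa [coeff_map, map_zero] at this
  exact_mod_cast (ZMod.intCast_zmod_eq_zero_iff_dvd _ p).mp h1

lemma step (p : ℕ) {c : ℤ} {f g : PowerSeries ℤ}
    (h1 : C (R := ℤ) c ∣ f - g) (h2 : C (R := ℤ) (p : ℤ) ∣ f - g) :
    C (R := ℤ) ((p : ℤ) * c) ∣ f ^ p - g ^ p := by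
  rw [← geom_sum₂_mul f g p, map_mul]
  refine mul_dvd_mul ?_ h1
  have key : C (R := ℤ) (p : ℤ) ∣ (∑ i ∈ range p, f ^ i * g ^ (p - 1 - i)) - p • g ^ (p - 1) := by
    have heq : (∑ i ∈ range p, f ^ i * g ^ (p - 1 - i)) - p • g ^ (p - 1)
        = ∑ i ∈ range p, (f ^ i - g ^ i) * g ^ (p - 1 - i) := by
      have hs : (p • g ^ (p - 1) : PowerSeries ℤ) = ∑ _i ∈ range p, g ^ (p - 1) := by
        rw [Finset.sum_const, Finset.card_range]
      rw [hs, ← Finset.sum_sub_distrib]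
      refine Finset.sum_congr rfl fun i hi => ?_
      have hi' : i + (p - 1 - i) = p - 1 := by
        have := Finset.mem_range.mp hi; omega
      rw [sub_mul, ← pow_add, hi']
    rw [heq]
    exact Finset.dvd_sum fun i _ =>
      dvd_mul_of_dvd_left (dvd_trans h2 (sub_dvd_pow_sub_pow f g i)) _
  have hsmul : C (R := ℤ) (p : ℤ) ∣ (p • g ^ (p - 1) : PowerSeries ℤ) := by
    rw [nsmul_eq_mul]
    exact dvd_mul_of_dvd_left (dvd_of_eq (map_natCast (C (R := ℤ)) p)) _
  have := dvd_add key hsmul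
  rwa [sub_add_cancel] at this

lemma stepGen (p : ℕ) (t : ℕ) {c : ℤ} {f g : PowerSeries ℤ}
    (h1 : C (R := ℤ) c ∣ f - g) (h2 : C (R := ℤ) (p : ℤ) ∣ f - g) :
    C (R := ℤ) ((p : ℤ) ^ t * c) ∣ f ^ p ^ t - g ^ p ^ t := by
  induction t with
  | zero => simpa using h1
  | succ t ih =>
      have h2t : C (R := ℤ) (p : ℤ) ∣ f ^ p ^ t - g ^ p ^ t :=
        dvd_trans h2 (sub_dvd_pow_sub_pow f g _)
      have := step p ih h2t
      rw [← mul_assoc, mul_comm ((p : ℤ)) ((p : ℤ) ^ t), ← pow_succ,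
        ← pow_mul, ← pow_mul, ← pow_succ] at this
      exact this

lemma keyCong (p : ℕ) (hp : p.Prime) (M' N' : ℕ) (f : PowerSeries ℤ) :
    C (R := ℤ) ((p : ℤ) ^ (N' + 1)) ∣
      f ^ p ^ (M' + N' + 1) - (pexp (p ^ (M' + 1)) f) ^ p ^ N' := by
  induction M' generalizing f with
  | zero =>
      have hbase := int_frobenius p hp f
      have hh := stepGen p N' hbase hbase
      rw [← pow_mul] at hh
      simp only [Nat.zero_add, pow_one]
      have e1 : p ^ (N' + 1) = p * p ^ N' := (pow_succ' p N')
      rw [e1]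
      exact dvd_trans (map_dvd (C (R := ℤ)) (dvd_of_eq (pow_succ (p:ℤ) N'))) hh
  | succ M' ih =>
      have hbase := int_frobenius p hp f
      have h1 := stepGen p (M' + N' + 1) hbase hbase
      have hmod : ((p:ℤ) ^ (N' + 1)) ∣ ((p:ℤ) ^ (M' + N' + 1) * (p:ℤ)) := by
        rw [← pow_succ]
        exact pow_dvd_pow _ (by omega)
      have h1' : C (R := ℤ) ((p : ℤ) ^ (N' + 1)) ∣
          (f ^ p) ^ p ^ (M' + N' + 1) - (pexp p f) ^ p ^ (M' + N' + 1) :=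
        dvd_trans (map_dvd (C (R := ℤ)) hmod) h1
      have h2 := ih (pexp p f)
      rw [pexp_pexp (pow_pos hp.pos _)] at h2
      have hcomp : pexp (p ^ (M' + 1) * p) f = pexp (p ^ (M' + 1 + 1)) f := by
        rw [← pow_succ]
      rw [hcomp] at h2
      have hfp : (f ^ p) ^ p ^ (M' + N' + 1) = f ^ p ^ (M' + 1 + N' + 1) := by
        rw [← pow_mul, ← pow_succ']
        have : M' + N' + 1 + 1 = M' + 1 + N' + 1 := by omega
        rw [this]
      rw [hfp] at h1'
      have := dvd_add h1' h2
      rwa [sub_add_sub_cancel] at this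


def Msupp (m : ℕ) (f : PowerSeries ℤ) : Prop := ∀ i, ¬ m ∣ i → coeff (R := ℤ) i f = 0

lemma Msupp_pexp (m : ℕ) (f : PowerSeries ℤ) : Msupp m (pexp m f) := fun i hi => by
  rw [coeff_pexp, if_neg hi]

lemma Msupp.one (m : ℕ) : Msupp m 1 := fun i hi => by
  have : i ≠ 0 := fun h => hi (by rw [h]; exact dvd_zero m)
  rw [coeff_one, if_neg this]

lemma Msupp.mul {m : ℕ} {f g : PowerSeries ℤ} (hf : Msupp m f) (hg : Msupp m g) :
    Msupp m (f * g) := by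
  intro n hn
  rw [coeff_mul]
  refine Finset.sum_eq_zero fun x hx => ?_
  have hxy := Finset.HasAntidiagonal.mem_antidiagonal.mp hx
  by_cases h1 : m ∣ x.1
  · have h2 : ¬ m ∣ x.2 := fun h => hn (by rw [← hxy]; exact dvd_add h1 h)
    rw [hg _ h2, mul_zero]
  · rw [hf _ h1, zero_mul]

lemma Msupp.pow {m : ℕ} {f : PowerSeries ℤ} (hf : Msupp m f) (e : ℕ) : Msupp m (f ^ e) := by
  induction e with
  | zero => simpa using Msupp.one m
  | succ e ih => rw [pow_succ]; exact ih.mul hf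

lemma prod_sub_one_dvd {dd : PowerSeries ℤ} (u : ℕ → PowerSeries ℤ) (s : Finset ℕ) :
    (∀ m ∈ s, dd ∣ u m - 1) → dd ∣ (∏ m ∈ s, u m) - 1 := by
  classical
  induction s using Finset.induction_on with
  | empty => intro _; simp
  | @insert a s ha ih =>
      intro h
      rw [Finset.prod_insert ha]
      have h1 : dd ∣ u a - 1 := h a (Finset.mem_insert_self a s)
      have h2 : dd ∣ (∏ m ∈ s, u m) - 1 := ih fun m hm => h m (Finset.mem_insert_of_mem hm)
      have heq : u a * ∏ m ∈ s, u m - 1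
          = u a * ((∏ m ∈ s, u m) - 1) + (u a - 1) := by ring
      rw [heq]
      exact dvd_add (Dvd.dvd.mul_left h2 _) h1

lemma coeff_mul_prod_trunc (u : ℕ → PowerSeries ℤ)
    (hu : ∀ m, 1 ≤ m → (X : PowerSeries ℤ) ^ m ∣ u m - 1)
    (F : PowerSeries ℤ) {i T : ℕ} (hiT : i ≤ T) :
    coeff (R := ℤ) i (F * ∏ m ∈ Icc 1 T, u m) = coeff (R := ℤ) i (F * ∏ m ∈ Icc 1 i, u m) := by
  have e : ∀ n : ℕ, Icc 1 n = Ioc 0 n := fun n => Finset.Icc_add_one_left_eq_Ioc 0 n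
  rw [e T, e i, ← Finset.prod_Ioc_consecutive u (Nat.zero_le i) hiT, ← mul_assoc]
  have hQ : (X : PowerSeries ℤ) ^ (i + 1) ∣ (∏ m ∈ Ioc i T, u m) - 1 :=
    prod_sub_one_dvd u _ fun m hm => by
      have h1 := (Finset.mem_Ioc.mp hm).1
      exact dvd_trans (pow_dvd_pow X h1) (hu m (by omega))
  obtain ⟨w, hw⟩ := hQ
  have hQ1 : (∏ m ∈ Ioc i T, u m) = X ^ (i + 1) * w + 1 := by
    rw [← hw]; ring
  rw [hQ1, mul_add, mul_one, map_add]
  have hz : coeff (R := ℤ) i ((F * ∏ m ∈ Ioc 0 i, u m) * (X ^ (i + 1) * w)) = 0 := by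
    have hdvd : (X : PowerSeries ℤ) ^ (i + 1) ∣
        (F * ∏ m ∈ Ioc 0 i, u m) * (X ^ (i + 1) * w) :=
      ⟨F * (∏ m ∈ Ioc 0 i, u m) * w, by ring⟩
    exact X_pow_dvd_iff.mp hdvd i (lt_add_one i)
  rw [hz, zero_add]

end EDGF

open EDGF




/-- `ElongatedDiamondGF d` says that for every `k ≥ 1`, the sequence `d k` satisfies the
formal power series identity `∑_{n≥0} d_k(n) q^n = ∏_{m≥1} (1 − q^{2m})^k / ∏_{m≥1} (1 − q^m)^{3k+1}`
in `ℤ[[q]]`, i.e. `(∑_{n≥0} d_k(n) q^n) · ∏_{m≥1} (1 − q^m)^{3k+1} = ∏_{m≥1} (1 − q^{2m})^k`.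
Since the factors with `m > n` do not affect the coefficient of `q^n`, this infinite-product
identity is encoded coefficient-wise via the truncated (finite) products over `1 ≤ m ≤ n`.
Combinatorially, `d k n` counts the partitions obtained by adding the links of the
`k`-elongated plane partition diamonds of length `n`. -/
def ElongatedDiamondGF (d : ℕ → ℕ → ℤ) : Prop :=
  ∀ k : ℕ, 1 ≤ k → ∀ n : ℕ,
    (PowerSeries.coeff (R := ℤ) n)
        ((PowerSeries.mk fun i => d k i) *
          ∏ m ∈ Finset.Icc 1 n, (1 - PowerSeries.X ^ m) ^ (3 * k + 1)) =
      (PowerSeries.coeff (R := ℤ) n) (∏ m ∈ Finset.Icc 1 n, (1 - PowerSeries.X ^ (2 * m)) ^ k)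

theorem stmt_3 (d : ℕ → ℕ → ℤ) (hd : ElongatedDiamondGF d)
    (p k j N M r : ℕ) (hp : p.Prime) (hk : 1 ≤ k) (hN : 1 ≤ N) (hM : 1 ≤ M)
    (hr1 : 1 ≤ r) (hr2 : r ≤ p ^ M - 1)
    (h : ∀ n : ℕ, (p : ℤ) ^ N ∣ d k (p ^ M * n + r)) :
    ∀ n : ℕ, (p : ℤ) ^ N ∣ d (p ^ (M + N - 1) * j + k) (p ^ M * n + r) := by

  intro n
  classical
  have hD : ∀ k : ℕ, 1 ≤ k → ∀ n : ℕ,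
      (PowerSeries.coeff (R := ℤ) n)
          ((PowerSeries.mk fun i => d k i) *
            ∏ m ∈ Finset.Icc 1 n, (1 - PowerSeries.X ^ m) ^ (3 * k + 1)) =
        (PowerSeries.coeff (R := ℤ) n) (∏ m ∈ Finset.Icc 1 n, (1 - PowerSeries.X ^ (2 * m)) ^ k) := hd
  have hppos := hp.pos
  have hpM : 0 < p ^ M := pow_pos hppos M
  have hrlt : r < p ^ M := lt_of_le_of_lt hr2 (Nat.sub_lt hpM one_pos)
  set q : ℕ := p ^ M with hq
  set T : ℕ := q * n + r with hTdef
  set K : ℕ := p ^ (M + N - 1) * j with hK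
  set k' : ℕ := K + k with hk'
  have hk'1 : 1 ≤ k' := le_trans hk (Nat.le_add_left k K)
  set A : PowerSeries ℤ := ∏ m ∈ Finset.Icc 1 T, (1 - X ^ m) with hA
  set B : PowerSeries ℤ := ∏ m ∈ Finset.Icc 1 T, (1 - X ^ (2 * m)) with hB
  -- generic unit-tail facts
  have hu : ∀ c : ℕ, 1 ≤ c → ∀ e : ℕ, ∀ m : ℕ, 1 ≤ m →
      (X : PowerSeries ℤ) ^ m ∣ (1 - X ^ (c * m)) ^ e - 1 := by
    intro c hc e m hm
    have h1 : (X : PowerSeries ℤ) ^ m ∣ (1 - X ^ (c * m)) - 1 := by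
      have heq : (1 - (X : PowerSeries ℤ) ^ (c * m)) - 1 = -(X ^ (c * m)) := by ring
      rw [heq]
      exact dvd_neg.mpr (pow_dvd_pow X (Nat.le_mul_of_pos_left m hc))
    exact dvd_trans h1 (by simpa using sub_dvd_pow_sub_pow (1 - (X : PowerSeries ℤ) ^ (c * m)) 1 e)
  -- the key truncated identity
  have main : ∀ κ : ℕ, 1 ≤ κ →
      (X : PowerSeries ℤ) ^ (T + 1) ∣
        (PowerSeries.mk fun i => d κ i) * A ^ (3 * κ + 1) - B ^ κ := by
    intro κ hκ
    rw [X_pow_dvd_iff]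
    intro i hi
    have hiT : i ≤ T := by omega
    rw [map_sub, sub_eq_zero]
    have hAi : A ^ (3 * κ + 1) = ∏ m ∈ Finset.Icc 1 T, (1 - X ^ m) ^ (3 * κ + 1) := by
      rw [hA, ← Finset.prod_pow]
    have hBi : B ^ κ = ∏ m ∈ Finset.Icc 1 T, (1 - X ^ (2 * m)) ^ κ := by
      rw [hB, ← Finset.prod_pow]
    have huA : ∀ m, 1 ≤ m → (X : PowerSeries ℤ) ^ m ∣ (1 - X ^ m) ^ (3 * κ + 1) - 1 :=
      fun m hm => by simpa using hu 1 le_rfl (3 * κ + 1) m hm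
    have huB : ∀ m, 1 ≤ m → (X : PowerSeries ℤ) ^ m ∣ (1 - X ^ (2 * m)) ^ κ - 1 :=
      fun m hm => hu 2 (by norm_num) κ m hm
    rw [hAi, hBi]
    rw [coeff_mul_prod_trunc _ huA (PowerSeries.mk fun i => d κ i) hiT]
    have hR : coeff (R := ℤ) i (∏ m ∈ Finset.Icc 1 T, (1 - X ^ (2 * m)) ^ κ)
        = coeff (R := ℤ) i (∏ m ∈ Finset.Icc 1 i, (1 - X ^ (2 * m)) ^ κ) := by
      have := coeff_mul_prod_trunc (fun m => (1 - X ^ (2 * m)) ^ κ) huB 1 hiT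
      simpa using this
    rw [hR]
    exact hD κ hκ i
  -- A is a unit
  have hcA : constantCoeff (R := ℤ) A = 1 := by
    rw [hA, map_prod]
    refine Finset.prod_eq_one fun m hm => ?_
    have hm1 : m ≠ 0 := by
      have := (Finset.mem_Icc.mp hm).1; omega
    rw [map_sub, map_one, map_pow, constantCoeff_X, zero_pow hm1, sub_zero]
  have hAunit : IsUnit A := by
    apply IsUnit.of_mul_eq_one (PowerSeries.invOfUnit A 1)
    exact PowerSeries.mul_invOfUnit A 1 (by rw [hcA]; rfl)
  obtain ⟨Au, hAu⟩ := hAunit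
  have hAinv : A * ((Au⁻¹ : (PowerSeries ℤ)ˣ) : PowerSeries ℤ) = 1 := by
    rw [← hAu]; exact Units.mul_inv Au
  set V : PowerSeries ℤ := ((Au⁻¹ : (PowerSeries ℤ)ˣ) : PowerSeries ℤ) with hV
  set G : PowerSeries ℤ := B * V ^ 3 with hG
  have h1 := main k hk
  have h2 := main k' hk'1
  have e1 : A ^ (3 * k' + 1) = A ^ (3 * K) * A ^ (3 * k + 1) := by
    rw [← pow_add]; congr 1; omega
  have e2 : B ^ k' = B ^ K * B ^ k := by
    rw [← pow_add]
  have h3 : (X : PowerSeries ℤ) ^ (T + 1) ∣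
      ((PowerSeries.mk fun i => d k' i) * A ^ (3 * K)
        - B ^ K * (PowerSeries.mk fun i => d k i)) * A ^ (3 * k + 1) := by
    have hh := dvd_sub h2 (Dvd.dvd.mul_left h1 (B ^ K))
    have heq : (PowerSeries.mk fun i => d k' i) * A ^ (3 * k' + 1) - B ^ k'
          - B ^ K * ((PowerSeries.mk fun i => d k i) * A ^ (3 * k + 1) - B ^ k)
        = ((PowerSeries.mk fun i => d k' i) * A ^ (3 * K)
            - B ^ K * (PowerSeries.mk fun i => d k i)) * A ^ (3 * k + 1) := by
      rw [e1, e2]; ring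
    rwa [heq] at hh
  have h4 : (X : PowerSeries ℤ) ^ (T + 1) ∣
      (PowerSeries.mk fun i => d k' i) * A ^ (3 * K)
        - B ^ K * (PowerSeries.mk fun i => d k i) := by
    have hAk : IsUnit (A ^ (3 * k + 1)) := IsUnit.pow (3 * k + 1) ⟨Au, hAu⟩
    obtain ⟨u, hu'⟩ := hAk
    have hh := h3.mul_right ((u⁻¹ : (PowerSeries ℤ)ˣ) : PowerSeries ℤ)
    rwa [mul_assoc, ← hu', Units.mul_inv, mul_one] at hh
  have h5 : (X : PowerSeries ℤ) ^ (T + 1) ∣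
      (PowerSeries.mk fun i => d k i) * G ^ K - PowerSeries.mk fun i => d k' i := by
    have hh := h4.mul_right (V ^ (3 * K))
    have hone : A ^ (3 * K) * V ^ (3 * K) = 1 := by
      rw [← mul_pow, hAinv, one_pow]
    have hGKe : G ^ K = B ^ K * V ^ (3 * K) := by
      rw [hG, mul_pow, ← pow_mul, mul_comm 3 K]
    have heq : ((PowerSeries.mk fun i => d k' i) * A ^ (3 * K)
          - B ^ K * (PowerSeries.mk fun i => d k i)) * V ^ (3 * K)
        = -((PowerSeries.mk fun i => d k i) * G ^ K - PowerSeries.mk fun i => d k' i) := by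
      rw [hGKe, sub_mul, mul_assoc, hone, mul_one]; ring
    rw [heq] at hh
    exact dvd_neg.mp hh
  -- the p-adic congruence
  have hKey := keyCong p hp (M - 1) (N - 1) G
  have eM : M - 1 + 1 = M := by omega
  have eN : N - 1 + 1 = N := by omega
  have eMN : M - 1 + (N - 1) + 1 = M + N - 1 := by omega
  rw [eM, eN, eMN] at hKey
  set H : PowerSeries ℤ := (pexp q G) ^ p ^ (N - 1) with hH
  have hGHj : C (R := ℤ) ((p : ℤ) ^ N) ∣ G ^ K - H ^ j := by
    have hh := dvd_trans hKey (sub_dvd_pow_sub_pow (G ^ p ^ (M + N - 1)) H j)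
    rwa [← pow_mul] at hh
  have hHsupp : Msupp q (H ^ j) := ((Msupp_pexp q G).pow _).pow j
  -- final coefficient computation
  have hcoeff : coeff (R := ℤ) T (PowerSeries.mk fun i => d k' i)
      = coeff (R := ℤ) T ((PowerSeries.mk fun i => d k i) * G ^ K) := by
    have hh := X_pow_dvd_iff.mp h5 T (lt_add_one T)
    rw [map_sub, sub_eq_zero] at hh
    exact hh.symm
  have hsplit : coeff (R := ℤ) T ((PowerSeries.mk fun i => d k i) * G ^ K)
      = coeff (R := ℤ) T ((PowerSeries.mk fun i => d k i) * (G ^ K - H ^ j))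
        + coeff (R := ℤ) T ((PowerSeries.mk fun i => d k i) * H ^ j) := by
    rw [← map_add]; congr 1; ring
  have hpart1 : (p : ℤ) ^ N ∣ coeff (R := ℤ) T ((PowerSeries.mk fun i => d k i) * (G ^ K - H ^ j)) :=
    (C_dvd_iff.mp (Dvd.dvd.mul_left hGHj _)) T
  have hpart2 : (p : ℤ) ^ N ∣ coeff (R := ℤ) T ((PowerSeries.mk fun i => d k i) * H ^ j) := by
    rw [coeff_mul]
    refine Finset.dvd_sum fun x hx => ?_
    have hxy := Finset.HasAntidiagonal.mem_antidiagonal.mp hx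
    by_cases hb : q ∣ x.2
    · obtain ⟨c, hc⟩ := hb
      have hcn : c ≤ n := by
        by_contra hcon
        push_neg at hcon
        have h1' : q * (n + 1) ≤ q * c := Nat.mul_le_mul_left q hcon
        rw [Nat.mul_succ] at h1'
        have h2' : q * c ≤ q * n + r := by
          rw [← hc]
          calc x.2 ≤ x.1 + x.2 := Nat.le_add_left _ _
          _ = T := hxy
          _ = q * n + r := hTdef
        linarith
      have key : x.1 + q * c = q * n + r := by
        rw [← hc, hxy, hTdef]
      have hxa : x.1 = q * (n - c) + r := by
        have h2' : (q * (n - c) + r) + q * c = q * n + r := by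
          have aux : q * (n - c) + q * c = q * n := by
            rw [← Nat.mul_add, Nat.sub_add_cancel hcn]
          calc (q * (n - c) + r) + q * c = (q * (n - c) + q * c) + r := by ring
          _ = q * n + r := by rw [aux]
        exact Nat.add_right_cancel (key.trans h2'.symm)
      have hda : (p : ℤ) ^ N ∣ d k x.1 := by
        rw [hxa]; exact h (n - c)
      rw [coeff_mk]
      exact hda.mul_right _
    · rw [hHsupp _ hb, mul_zero]
      exact dvd_zero _
  have hgoal : d k' T = coeff (R := ℤ) T (PowerSeries.mk fun i => d k' i) := (coeff_mk T _).symm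
  have : (p : ℤ) ^ N ∣ d k' T := by
    rw [hgoal, hcoeff, hsplit]
    exact dvd_add hpart1 hpart2
  exact this
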